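/- Let L, R be invertible diagonal N×N complex matrices and μ a complex number such that 1 + μL and 1 + μR are invertible. Let |e⟩ be a column vector, ⟨a|, ⟨b| row vectors, and A, B N×N complex matrices satisfying L·A − A·R = |e⟩⟨a| and R·B − B·L = |e⟩⟨b|. Assume 1 − BA, 1 − BL⁻¹AR, and 1 − B(1+μL)⁻¹A(1+μR) are invertible. Set τ = det(1 − AB), τ_S = det(1 − ARBL⁻¹), τ_X = det(1 − A(1+μR)B(1+μL)⁻¹), τ_SX = det(1 − AR(1+μR)BL⁻¹(1+μL)⁻¹), σ_S = τ_S · ⟨a|R(1 − BL⁻¹AR)⁻¹R⁻¹|e⟩, and ρ_X = −τ_X · ⟨b|(1+μL)⁻¹L⁻¹(1 − A(1+μR)B(1+μL)⁻¹)⁻¹|e⟩. Then μ·σ_S·ρ_X − τ_S·τ_X + τ·τ_SX = 0. -/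

import Mathlib

open Matrix


lemma vecMul_rank1 (z w v : Fin n → ℂ) : z ᵥ* vecMulVec w v = (z ⬝ᵥ w) • v := by
  funext j
  simp [vecMul, vecMulVec, dotProduct, Finset.sum_mul, mul_assoc]

lemma vecMul_smulM (z : Fin n → ℂ) (c : ℂ) (M : Matrix (Fin n) (Fin n) ℂ) :
    z ᵥ* (c • M) = c • (z ᵥ* M) := by
  funext j
  simp [vecMul, dotProduct, Finset.mul_sum, mul_left_comm]

lemma vecMulVec_mulM (w v : Fin n → ℂ) (M : Matrix (Fin n) (Fin n) ℂ) :
    vecMulVec w v * M = vecMulVec w (v ᵥ* M) := by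
  ext i j
  simp [vecMulVec_apply, mul_apply, vecMul, dotProduct, Finset.mul_sum, mul_assoc]

lemma shiftA {n : ℕ} (L R A : Matrix (Fin n) (Fin n) ℂ) (μ : ℂ) (e a : Fin n → ℂ)
    (hA : L * A - A * R = vecMulVec e a) :
    A * (1 + μ • R) = (1 + μ • L) * A - μ • vecMulVec e a := by
  have h1 : A * R = L * A - vecMulVec e a := by rw [← hA]; abel
  rw [Matrix.mul_add, Matrix.mul_one, Matrix.mul_smul, h1, Matrix.add_mul, Matrix.one_mul,
    Matrix.smul_mul, smul_sub]
  abel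

lemma tau_shift {n : ℕ} (L R A B : Matrix (Fin n) (Fin n) ℂ) (μ : ℂ) (e a : Fin n → ℂ)
    (hμL : IsUnit (1 + μ • L)) (hA : L * A - A * R = vecMulVec e a)
    (hG : IsUnit ((1 - A * B).det)) :
    (1 - A * (1 + μ • R) * B * (1 + μ • L)⁻¹).det
      = (1 - A * B).det * (1 + μ * (a ᵥ* (B * (1 - A * B)⁻¹ * (1 + μ • L)⁻¹) ⬝ᵥ e)) := by
  have hdK : IsUnit (1 + μ • L).det := (Matrix.isUnit_iff_isUnit_det _).mp hμL
  have hK1 : (1 + μ • L) * (1 + μ • L)⁻¹ = 1 := Matrix.mul_nonsing_inv _ hdK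
  have hK1' : ∀ X : Matrix (Fin n) (Fin n) ℂ, (1 + μ • L) * ((1 + μ • L)⁻¹ * X) = X := by
    intro X; rw [← Matrix.mul_assoc, hK1, Matrix.one_mul]
  have hAc := shiftA L R A μ e a hA
  -- factorization
  have key : 1 - A * (1 + μ • R) * B * (1 + μ • L)⁻¹
      = (1 + μ • L) * ((1 - A * B) + (μ • ((1 + μ • L)⁻¹ * replicateCol Unit e)) * (replicateRow Unit a * B))
          * (1 + μ • L)⁻¹ := by
    have hUV : (μ • ((1 + μ • L)⁻¹ * replicateCol Unit e)) * (replicateRow Unit a * B)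
        = μ • ((1 + μ • L)⁻¹ * (vecMulVec e a * B)) := by
      rw [Matrix.smul_mul, vecMulVec_eq Unit]
      simp only [Matrix.mul_assoc]
    rw [hUV, show A * (1 + μ • R) * B = (A * (1 + μ • R)) * B from rfl, hAc]
    simp only [Matrix.mul_add, Matrix.add_mul, Matrix.sub_mul, Matrix.mul_sub,
      Matrix.smul_mul, Matrix.mul_smul, Matrix.mul_one, Matrix.one_mul, Matrix.mul_assoc,
      hK1', hK1]
    abel
  rw [key, det_mul, det_mul, Matrix.det_add_mul _ _ hG]
  have entry : (1 + replicateRow Unit a * B * (1 - A * B)⁻¹ * (μ • ((1 + μ • L)⁻¹ * replicateCol Unit e))).det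
      = 1 + μ * (a ᵥ* (B * (1 - A * B)⁻¹ * (1 + μ • L)⁻¹) ⬝ᵥ e) := by
    have hrow : replicateRow Unit a * B * (1 - A * B)⁻¹ * (μ • ((1 + μ • L)⁻¹ * replicateCol Unit e))
        = μ • (replicateRow Unit (a ᵥ* (B * (1 - A * B)⁻¹ * (1 + μ • L)⁻¹)) * replicateCol Unit e) := by
      rw [Matrix.mul_smul]
      congr 1
      rw [Matrix.replicateRow_vecMul]
      simp only [Matrix.mul_assoc]
    rw [hrow, det_unique]
    simp [Matrix.add_apply, Matrix.one_apply_eq, Matrix.smul_apply, Matrix.replicateRow_mul_replicateCol_apply,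
      smul_eq_mul]
  rw [entry]
  have hdet1 : (1 + μ • L).det * (1 + μ • L)⁻¹.det = 1 := by
    rw [← det_mul, hK1, det_one]
  rw [show (1 + μ • L).det * ((1-A*B).det * (1 + μ * (a ᵥ* (B * (1 - A * B)⁻¹ * (1 + μ • L)⁻¹) ⬝ᵥ e))) * (1 + μ • L)⁻¹.det
    = ((1 + μ • L).det * (1 + μ • L)⁻¹.det) * ((1-A*B).det * (1 + μ * (a ᵥ* (B * (1 - A * B)⁻¹ * (1 + μ • L)⁻¹) ⬝ᵥ e))) from by ring, hdet1, one_mul]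

set_option maxHeartbeats 1000000 in
/-- With the rank-one conditions and the indicated shifted matrices, the tau-functions
satisfy the bilinear equation `μ σ_S ρ_X − τ_S τ_X + τ τ_SX = 0`. -/
theorem stmt17 (N : ℕ) (L R : Matrix (Fin N) (Fin N) ℂ) (μ : ℂ)
    (A B : Matrix (Fin N) (Fin N) ℂ) (e a b : Fin N → ℂ)
    (hLd : L.IsDiag) (hRd : R.IsDiag) (hL : IsUnit L) (hR : IsUnit R)
    (hμL : IsUnit (1 + μ • L)) (hμR : IsUnit (1 + μ • R))
    (hA : L * A - A * R = vecMulVec e a)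
    (hB : R * B - B * L = vecMulVec e b)
    (h1 : IsUnit (1 - B * A))
    (h2 : IsUnit (1 - B * L⁻¹ * A * R))
    (h3 : IsUnit (1 - B * (1 + μ • L)⁻¹ * A * (1 + μ • R))) :
    let τ : ℂ := (1 - A * B).det
    let τS : ℂ := (1 - A * R * B * L⁻¹).det
    let τX : ℂ := (1 - A * (1 + μ • R) * B * (1 + μ • L)⁻¹).det
    let τSX : ℂ := (1 - A * R * (1 + μ • R) * B * L⁻¹ * (1 + μ • L)⁻¹).det
    let σS : ℂ := τS * (a ᵥ* (R * (1 - B * L⁻¹ * A * R)⁻¹ * R⁻¹) ⬝ᵥ e)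
    let ρX : ℂ := -(τX *
      (b ᵥ* ((1 + μ • L)⁻¹ * L⁻¹ * (1 - A * (1 + μ • R) * B * (1 + μ • L)⁻¹)⁻¹) ⬝ᵥ e))
    μ * σS * ρX - τS * τX + τ * τSX = 0 := by
  intro τ τS τX τSX σS ρX
  show μ * ((1 - A * R * B * L⁻¹).det * (a ᵥ* (R * (1 - B * L⁻¹ * A * R)⁻¹ * R⁻¹) ⬝ᵥ e)) *
      (-((1 - A * (1 + μ • R) * B * (1 + μ • L)⁻¹).det *
        (b ᵥ* ((1 + μ • L)⁻¹ * L⁻¹ * (1 - A * (1 + μ • R) * B * (1 + μ • L)⁻¹)⁻¹) ⬝ᵥ e)))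
    - (1 - A * R * B * L⁻¹).det * (1 - A * (1 + μ • R) * B * (1 + μ • L)⁻¹).det
    + (1 - A * B).det * (1 - A * R * (1 + μ • R) * B * L⁻¹ * (1 + μ • L)⁻¹).det = 0
  -- determinant units
  have hdG : IsUnit (1 - A * B).det := by
    rw [Matrix.det_one_sub_mul_comm]; exact (Matrix.isUnit_iff_isUnit_det _).mp h1
  have hdH : IsUnit (1 - B * A).det := (Matrix.isUnit_iff_isUnit_det _).mp h1
  have hdP : IsUnit (1 - B * L⁻¹ * A * R).det := (Matrix.isUnit_iff_isUnit_det _).mp h2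
  have hdW : IsUnit (1 - A * R * B * L⁻¹).det := by
    rw [show (1 : Matrix (Fin N) (Fin N) ℂ) - A * R * B * L⁻¹ = 1 - (A * R) * (B * L⁻¹) from by
        simp only [Matrix.mul_assoc], Matrix.det_one_sub_mul_comm,
      show (1 : Matrix (Fin N) (Fin N) ℂ) - (B * L⁻¹) * (A * R) = 1 - B * L⁻¹ * A * R from by
        simp only [Matrix.mul_assoc]]
    exact hdP
  have hdXi : IsUnit (1 - A * (1 + μ • R) * B * (1 + μ • L)⁻¹).det := by
    rw [show (1 : Matrix (Fin N) (Fin N) ℂ) - A * (1 + μ • R) * B * (1 + μ • L)⁻¹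
        = 1 - (A * (1 + μ • R)) * (B * (1 + μ • L)⁻¹) from by simp only [Matrix.mul_assoc],
      Matrix.det_one_sub_mul_comm,
      show (1 : Matrix (Fin N) (Fin N) ℂ) - (B * (1 + μ • L)⁻¹) * (A * (1 + μ • R))
        = 1 - B * (1 + μ • L)⁻¹ * A * (1 + μ • R) from by simp only [Matrix.mul_assoc]]
    exact (Matrix.isUnit_iff_isUnit_det _).mp h3
  have hdL : IsUnit L.det := (Matrix.isUnit_iff_isUnit_det _).mp hL
  have hdR : IsUnit R.det := (Matrix.isUnit_iff_isUnit_det _).mp hR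
  have hdK : IsUnit (1 + μ • L).det := (Matrix.isUnit_iff_isUnit_det _).mp hμL
  -- the two determinant expansions (before abbreviating)
  have EX := tau_shift L R A B μ e a hμL hA hdG
  have hA' : L * (A * R) - (A * R) * R = vecMulVec e (a ᵥ* R) := by
    rw [← vecMulVec_mulM, ← hA]; noncomm_ring
  have hdW' : IsUnit (1 - (A * R) * (B * L⁻¹)).det := by
    rw [show (1 : Matrix (Fin N) (Fin N) ℂ) - (A * R) * (B * L⁻¹) = 1 - A * R * B * L⁻¹ from by
      simp only [Matrix.mul_assoc]]
    exact hdW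
  have ESX := tau_shift L R (A * R) (B * L⁻¹) μ e (a ᵥ* R) hμL hA' hdW'
  -- abbreviations
  set Li := L⁻¹ with hLidef
  set Ri := R⁻¹ with hRidef
  set K := (1 + μ • L)⁻¹ with hKdef
  set G := (1 - A * B)⁻¹ with hGdef
  set Hm := (1 - B * A)⁻¹ with hHdef
  set W := (1 - A * R * B * Li)⁻¹ with hWdef
  set P := (1 - B * Li * A * R)⁻¹ with hPdef
  set Xi := (1 - A * (1 + μ • R) * B * K)⁻¹ with hXidef
  -- inverse equations
  have hGl : (1 - A * B) * G = 1 := Matrix.mul_nonsing_inv _ hdG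
  have hGr : G * (1 - A * B) = 1 := Matrix.nonsing_inv_mul _ hdG
  have hHl : (1 - B * A) * Hm = 1 := Matrix.mul_nonsing_inv _ hdH
  have hHr : Hm * (1 - B * A) = 1 := Matrix.nonsing_inv_mul _ hdH
  have hWl : (1 - A * R * B * Li) * W = 1 := Matrix.mul_nonsing_inv _ hdW
  have hWr : W * (1 - A * R * B * Li) = 1 := Matrix.nonsing_inv_mul _ hdW
  have hXil : (1 - A * (1 + μ • R) * B * K) * Xi = 1 := Matrix.mul_nonsing_inv _ hdXi
  have hXir : Xi * (1 - A * (1 + μ • R) * B * K) = 1 := Matrix.nonsing_inv_mul _ hdXi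
  have hPr : P * (1 - B * Li * A * R) = 1 := Matrix.nonsing_inv_mul _ hdP
  have hLLi : L * Li = 1 := Matrix.mul_nonsing_inv _ hdL
  have hLiL : Li * L = 1 := Matrix.nonsing_inv_mul _ hdL
  have hRRi : R * Ri = 1 := Matrix.mul_nonsing_inv _ hdR
  have hRiR : Ri * R = 1 := Matrix.nonsing_inv_mul _ hdR
  have hKK : (1 + μ • L) * K = 1 := Matrix.mul_nonsing_inv _ hdK
  have hKK' : K * (1 + μ • L) = 1 := Matrix.nonsing_inv_mul _ hdK
  -- basic rank-one rearrangements
  have hRB : R * B = B * L + vecMulVec e b := by rw [← hB]; abel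
  have hRBL : R * B * Li = B + vecMulVec e b * Li := by
    rw [hRB, Matrix.add_mul, Matrix.mul_assoc, hLLi, Matrix.mul_one]
  -- F1 : G*A = A*Hm
  have F1 : G * A = A * Hm := by
    calc G * A = G * (A * ((1 - B * A) * Hm)) := by rw [hHl, Matrix.mul_one]
    _ = G * ((1 - A * B) * (A * Hm)) := by rw [show A * ((1 - B * A) * Hm) = (1 - A * B) * (A * Hm) from by noncomm_ring]
    _ = (G * (1 - A * B)) * (A * Hm) := by rw [Matrix.mul_assoc]
    _ = A * Hm := by rw [hGr, Matrix.one_mul]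
  -- F2 : B*(A*Hm) = Hm - 1
  have F2 : B * (A * Hm) = Hm - 1 := by
    have h : Hm - B * (A * Hm) = 1 := by
      rw [show Hm - B * (A * Hm) = (1 - B * A) * Hm from by noncomm_ring, hHl]
    rw [← h]; abel
  -- F4 : resolvent expansion of W
  have hLam : (1 : Matrix (Fin N) (Fin N) ℂ) - A * R * B * Li
      = (1 - A * B) - A * (vecMulVec e b * Li) := by
    rw [show A * R * B * Li = A * (R * B * Li) from by simp only [Matrix.mul_assoc], hRBL]
    noncomm_ring
  have F4 : W = G + A * (Hm * (vecMulVec e b * (Li * W))) := by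
    have step : G * (1 - A * R * B * Li) = 1 - (A * Hm) * (vecMulVec e b * Li) := by
      rw [hLam, Matrix.mul_sub, hGr, ← Matrix.mul_assoc, F1]
    have h2' : G = (1 - (A * Hm) * (vecMulVec e b * Li)) * W := by
      rw [← step, Matrix.mul_assoc, hWl, Matrix.mul_one]
    rw [h2']; noncomm_ring
  -- FBW and F9
  have FBW : B * W = B * G + (Hm - 1) * (vecMulVec e b * (Li * W)) := by
    conv_lhs => rw [F4]
    rw [show B * (G + A * (Hm * (vecMulVec e b * (Li * W))))
      = B * G + (B * (A * Hm)) * (vecMulVec e b * (Li * W)) from by noncomm_ring, F2]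
  have F9 : R * (B * (Li * (W * K))) = B * (G * K)
      + (Hm - 1) * (vecMulVec e b * (Li * (W * K))) + vecMulVec e b * (Li * (W * K)) := by
    rw [show R * (B * (Li * (W * K))) = (R * B * Li) * (W * K) from by
      simp only [Matrix.mul_assoc], hRBL,
      show (B + vecMulVec e b * Li) * (W * K) = (B * W) * K + vecMulVec e b * (Li * (W * K)) from by
        noncomm_ring, FBW]
    noncomm_ring
  -- F5 : sigma relation
  have hconj : R * (1 - B * Li * A * R) * Ri = 1 - B * A - vecMulVec e b * (Li * A) := by
    rw [show R * (1 - B * Li * A * R) * Ri = R * Ri - (R * B * Li) * (A * (R * Ri)) from by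
      noncomm_ring, hRRi, hRBL]
    noncomm_ring
  have hQ1 : (R * (P * Ri)) * (1 - B * A - vecMulVec e b * (Li * A)) = 1 := by
    rw [← hconj,
      show (R * (P * Ri)) * (R * (1 - B * Li * A * R) * Ri)
        = R * ((P * ((Ri * R) * (1 - B * Li * A * R))) * Ri) from by simp only [Matrix.mul_assoc],
      hRiR, Matrix.one_mul, hPr, Matrix.one_mul, hRRi]
  have F5 : Hm = R * (P * Ri) - R * (P * (Ri * (vecMulVec e b * (Li * (A * Hm))))) := by
    calc Hm = ((R * (P * Ri)) * (1 - B * A - vecMulVec e b * (Li * A))) * Hm := by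
          rw [hQ1, Matrix.one_mul]
    _ = (R * (P * Ri)) * ((1 - B * A) * Hm)
        - R * (P * (Ri * (vecMulVec e b * (Li * (A * Hm))))) := by noncomm_ring
    _ = R * (P * Ri) - R * (P * (Ri * (vecMulVec e b * (Li * (A * Hm))))) := by
          rw [hHl, Matrix.mul_one]
  -- X-shift structure
  have hAc : A * (1 + μ • R) = (1 + μ • L) * A - μ • vecMulVec e a := shiftA L R A μ e a hA
  have hXiE : (1 : Matrix (Fin N) (Fin N) ℂ) - A * (1 + μ • R) * B * K
      = (1 + μ • L) * ((1 - A * B) * K) + μ • (vecMulVec e a * (B * K)) := by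
    rw [show A * (1 + μ • R) * B * K = (A * (1 + μ • R)) * (B * K) from by
      simp only [Matrix.mul_assoc], hAc]
    have h : (1 + μ • L) * ((1 - A * B) * K) = 1 - ((1 + μ • L) * A) * (B * K) := by
      rw [Matrix.sub_mul, Matrix.one_mul, Matrix.mul_sub, hKK]
      rw [show (1 + μ • L) * (A * B * K) = ((1 + μ • L) * A) * (B * K) from by
        simp only [Matrix.mul_assoc]]
    rw [h, Matrix.sub_mul, Matrix.smul_mul]
    abel
  -- F7
  have F7 : B * (G * K) = B * (K * Xi) + μ • (B * (G * (K * (vecMulVec e a * (B * (K * Xi)))))) := by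
    have h1 : (B * (G * K)) * (1 - A * (1 + μ • R) * B * K)
        = B * K + μ • (B * (G * (K * (vecMulVec e a * (B * K))))) := by
      rw [hXiE, Matrix.mul_add, Matrix.mul_smul]
      congr 1
      · rw [show B * (G * K) * ((1 + μ • L) * ((1 - A * B) * K))
          = B * (G * ((K * (1 + μ • L)) * ((1 - A * B) * K))) from by simp only [Matrix.mul_assoc],
          hKK', Matrix.one_mul,
          show B * (G * ((1 - A * B) * K)) = B * ((G * (1 - A * B)) * K) from by
            simp only [Matrix.mul_assoc], hGr, Matrix.one_mul]
      · congr 1; simp only [Matrix.mul_assoc]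
    have h2 := congrArg (fun X => X * Xi) h1
    rw [Matrix.mul_assoc, hXil, Matrix.mul_one] at h2
    rw [h2, Matrix.add_mul, Matrix.smul_mul]
    congr 1
    · simp only [Matrix.mul_assoc]
    · congr 1; simp only [Matrix.mul_assoc]
  -- F6
  have F6 : Li * (G * K) = Li * (K * Xi)
      + μ • (Li * (G * (K * (vecMulVec e a * (B * (K * Xi)))))) := by
    have h1 : (Li * (G * K)) * (1 - A * (1 + μ • R) * B * K)
        = Li * K + μ • (Li * (G * (K * (vecMulVec e a * (B * K))))) := by
      rw [hXiE, Matrix.mul_add, Matrix.mul_smul]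
      congr 1
      · rw [show Li * (G * K) * ((1 + μ • L) * ((1 - A * B) * K))
          = Li * (G * ((K * (1 + μ • L)) * ((1 - A * B) * K))) from by simp only [Matrix.mul_assoc],
          hKK', Matrix.one_mul,
          show Li * (G * ((1 - A * B) * K)) = Li * ((G * (1 - A * B)) * K) from by
            simp only [Matrix.mul_assoc], hGr, Matrix.one_mul]
      · congr 1; simp only [Matrix.mul_assoc]
    have h2 := congrArg (fun X => X * Xi) h1
    rw [Matrix.mul_assoc, hXil, Matrix.mul_one] at h2
    rw [h2, Matrix.add_mul, Matrix.smul_mul]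
    congr 1
    · simp only [Matrix.mul_assoc]
    · congr 1; simp only [Matrix.mul_assoc]
  -- F8 : commutation
  have F8 : K * Li = Li * K := by
    have h1 : Li * (1 + μ • L) = (1 + μ • L) * Li := by
      rw [Matrix.mul_add, Matrix.add_mul, Matrix.mul_one, Matrix.one_mul, Matrix.mul_smul,
        Matrix.smul_mul, hLiL, hLLi]
    calc K * Li = K * (Li * ((1 + μ • L) * K)) := by rw [hKK, Matrix.mul_one]
    _ = K * ((Li * (1 + μ • L)) * K) := by rw [Matrix.mul_assoc]
    _ = K * (((1 + μ • L) * Li) * K) := by rw [h1]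
    _ = (K * (1 + μ • L)) * (Li * K) := by simp only [Matrix.mul_assoc]
    _ = Li * K := by rw [hKK', Matrix.one_mul]
  have F8X : K * (Li * Xi) = Li * (K * Xi) := by
    rw [← Matrix.mul_assoc, F8, Matrix.mul_assoc]
  -- F4K
  have F4K : Li * (W * K) = Li * (G * K) + Li * (A * (Hm * (vecMulVec e b * (Li * (W * K))))) := by
    conv_lhs => rw [F4]
    noncomm_ring
  -- scalar relations by sandwiching
  have Er := congrArg (fun X => a ᵥ* X ⬝ᵥ e) F9
  have EC := congrArg (fun X => b ᵥ* X ⬝ᵥ e) F4K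
  have EA := congrArg (fun X => a ᵥ* X ⬝ᵥ e) F5
  have Eq' := congrArg (fun X => a ᵥ* X ⬝ᵥ e) F7
  have EBd := congrArg (fun X => b ᵥ* X ⬝ᵥ e) F6
  have Et := congrArg (fun X => b ᵥ* X ⬝ᵥ e) F8X
  simp only [← Matrix.vecMul_vecMul, Matrix.vecMul_add, Matrix.vecMul_sub, Matrix.add_vecMul,
    Matrix.sub_vecMul, Matrix.smul_vecMul, vecMul_smulM, vecMul_rank1, Matrix.vecMul_one,
    add_dotProduct, sub_dotProduct, smul_dotProduct, smul_eq_mul]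
    at Er EC EA Eq' EBd Et EX ESX ⊢
  rw [show (1 : Matrix (Fin N) (Fin N) ℂ) - A * R * (1 + μ • R) * (B * Li) * K
      = 1 - A * R * (1 + μ • R) * B * Li * K from by simp only [Matrix.mul_assoc],
    show (1 : Matrix (Fin N) (Fin N) ℂ) - A * R * (B * Li) = 1 - A * R * B * Li from by
      simp only [Matrix.mul_assoc], ← hWdef] at ESX
  rw [EX, ESX, Et]
  linear_combination
    (μ * (1 - A * B).det * (1 - A * R * B * Li).det) * Er
    + (μ * (1 - A * B).det * (1 - A * R * B * Li).det * (b ᵥ* Li ᵥ* W ᵥ* K ⬝ᵥ e)) * EA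
    + (μ * (1 - A * B).det * (1 - A * R * B * Li).det * (a ᵥ* R ᵥ* P ᵥ* Ri ⬝ᵥ e)) * EC
    + (μ * (1 - A * B).det * (1 - A * R * B * Li).det * (a ᵥ* R ᵥ* P ᵥ* Ri ⬝ᵥ e)
        * (1 + μ * (a ᵥ* B ᵥ* G ᵥ* K ⬝ᵥ e))) * EBd
    - (μ * (1 - A * B).det * (1 - A * R * B * Li).det * (a ᵥ* R ᵥ* P ᵥ* Ri ⬝ᵥ e)
        * (b ᵥ* Li ᵥ* G ᵥ* K ⬝ᵥ e) * μ) * Eq'
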